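/- With parameters d ≥ 1, k ≥ 1, 0 ≤ a ≤ k, 1 ≤ e,f ≤ d: if f ≤ e then U_{dk+e,da+f}(x) − U_{dk+e,da+f−1}(x) = (xq)^{da+f−1} \overline{U}_{dk+e,d(k−a)+d}(xq) + (xq)^{da+d+f−1} \overline{U}_{dk+e,d(k−a−1)+d}(xq). -/

import Mathlib

/-- An overpartition recorded by a pair of multiplicity functions:
`p.1 i` is the number of non-overlined occurrences of the part `i` and
`p.2 i ∈ {0, 1}` is the number of overlined occurrences of `i`.
There are no parts equal to `0`. -/
def IsOverPtn (p : (ℕ →₀ ℕ) × (ℕ →₀ ℕ)) : Prop :=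
  p.1 0 = 0 ∧ p.2 0 = 0 ∧ ∀ i, p.2 i ≤ 1

/-- The number of parts of an overpartition. -/
def opParts (p : (ℕ →₀ ℕ) × (ℕ →₀ ℕ)) : ℕ :=
  (p.1.sum fun _ v => v) + (p.2.sum fun _ v => v)

/-- The weight (number partitioned) of an overpartition. -/
def opWt (p : (ℕ →₀ ℕ) × (ℕ →₀ ℕ)) : ℕ :=
  (p.1.sum fun i v => i * v) + (p.2.sum fun i v => i * v)

/-- Conditions (i)-(iv) of Definition 1.6 (Kursungoz–Zadehdabbagh), with modulus `d`,
first index `N = dk + e` and second index `M = da + f`: writing `f_i = p.1 i`,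
`f_{ī} = p.2 i`,
(i) `f_1 ≤ M - 1 + (d-1) f_{1̄}`;
(ii) `f_{2l-1} ≥ (d-1) f_{\overline{2l-1}}`;
(iii) `f_{2l} + f_{\overline{2l}} ≡ 0 (mod d)`;
(iv) `f_l + f_{l̄} + f_{l+1} ≤ N - 1 + (d-1) f_{\overline{l+1}}` for all `l ≥ 1`. -/
def uCond (d N M : ℕ) (p : (ℕ →₀ ℕ) × (ℕ →₀ ℕ)) : Prop :=
  p.1 1 + 1 ≤ M + (d - 1) * p.2 1 ∧
  (∀ l : ℕ, (d - 1) * p.2 (2 * l + 1) ≤ p.1 (2 * l + 1)) ∧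
  (∀ l : ℕ, d ∣ p.1 (2 * l + 2) + p.2 (2 * l + 2)) ∧
  (∀ l : ℕ, 1 ≤ l → p.1 l + p.2 l + p.1 (l + 1) + 1 ≤ N + (d - 1) * p.2 (l + 1))

/-- Conditions (ī)-(iv̄): as `uCond` with the parity roles of odd and even parts
swapped in the second and third conditions. -/
def ubarCond (d N M : ℕ) (p : (ℕ →₀ ℕ) × (ℕ →₀ ℕ)) : Prop :=
  p.1 1 + 1 ≤ M + (d - 1) * p.2 1 ∧
  (∀ l : ℕ, (d - 1) * p.2 (2 * l + 2) ≤ p.1 (2 * l + 2)) ∧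
  (∀ l : ℕ, d ∣ p.1 (2 * l + 1) + p.2 (2 * l + 1)) ∧
  (∀ l : ℕ, 1 ≤ l → p.1 l + p.2 l + p.1 (l + 1) + 1 ≤ N + (d - 1) * p.2 (l + 1))

/-- `u_{N, M}(m, n)`: the number of overpartitions of `n` into `m` parts
satisfying conditions (i)-(iv). -/
noncomputable def uCount (d N M m n : ℕ) : ℕ :=
  Set.ncard {p : (ℕ →₀ ℕ) × (ℕ →₀ ℕ) |
    IsOverPtn p ∧ opParts p = m ∧ opWt p = n ∧ uCond d N M p}

/-- `ū_{N, M}(m, n)`: the number of overpartitions of `n` into `m` parts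
satisfying conditions (ī)-(iv̄). -/
noncomputable def ubarCount (d N M m n : ℕ) : ℕ :=
  Set.ncard {p : (ℕ →₀ ℕ) × (ℕ →₀ ℕ) |
    IsOverPtn p ∧ opParts p = m ∧ opWt p = n ∧ ubarCond d N M p}

/-- The two-variable generating function `U_{N,M}(x) = Σ u_{N,M}(m,n) x^m q^n`. -/
noncomputable def Ugf (d N M : ℕ) (x q : ℂ) : ℂ :=
  ∑' mn : ℕ × ℕ, (uCount d N M mn.1 mn.2 : ℂ) * x ^ mn.1 * q ^ mn.2

/-- The two-variable generating function `Ū_{N,M}(x) = Σ ū_{N,M}(m,n) x^m q^n`. -/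
noncomputable def UbarGf (d N M : ℕ) (x q : ℂ) : ℂ :=
  ∑' mn : ℕ × ℕ, (ubarCount d N M mn.1 mn.2 : ℂ) * x ^ mn.1 * q ^ mn.2

/-- The infinite q-Pochhammer symbol `(a; q)_∞ = ∏_{j ≥ 0} (1 - a q^j)`. -/
noncomputable def qPochInf (a q : ℂ) : ℂ := ∏' j : ℕ, (1 - a * q ^ j)

/-- The finite q-Pochhammer symbol `(a; q)_n = ∏_{j=0}^{n-1} (1 - a q^j)`. -/
noncomputable def qPochFin (a q : ℂ) (n : ℕ) : ℂ := ∏ j ∈ Finset.range n, (1 - a * q ^ j)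

namespace KZ

open Finsupp

/-! ### shift maps -/

noncomputable def upg (g : ℕ →₀ ℕ) : ℕ →₀ ℕ := Finsupp.embDomain ⟨Nat.succ, Nat.succ_injective⟩ g

lemma upg_zero (g : ℕ →₀ ℕ) : upg g 0 = 0 :=
  Finsupp.embDomain_notin_range _ _ _ (by rintro ⟨i, h⟩; exact Nat.succ_ne_zero i h)

lemma upg_succ (g : ℕ →₀ ℕ) (i : ℕ) : upg g (i + 1) = g i := Finsupp.embDomain_apply_self _ g i

noncomputable def dng (g : ℕ →₀ ℕ) : ℕ →₀ ℕ :=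
  (Finsupp.comapDomain Nat.succ g Nat.succ_injective.injOn).erase 0

lemma dng_zero (g : ℕ →₀ ℕ) : dng g 0 = 0 := Finsupp.erase_same

lemma dng_succ (g : ℕ →₀ ℕ) (i : ℕ) : dng g (i + 1) = g (i + 2) := by
  rw [dng, Finsupp.erase_ne (Nat.succ_ne_zero i)]
  exact Finsupp.comapDomain_apply _ _ _ _

/-! ### weights -/

def fct (g : ℕ →₀ ℕ) : ℕ := g.sum fun _ v => v
def fwt (g : ℕ →₀ ℕ) : ℕ := g.sum fun i v => i * v

lemma opParts_eq (p : (ℕ →₀ ℕ) × (ℕ →₀ ℕ)) : opParts p = fct p.1 + fct p.2 := rfl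
lemma opWt_eq (p : (ℕ →₀ ℕ) × (ℕ →₀ ℕ)) : opWt p = fwt p.1 + fwt p.2 := rfl

lemma fct_add (g h : ℕ →₀ ℕ) : fct (g + h) = fct g + fct h :=
  Finsupp.sum_add_index' (fun _ => rfl) (fun _ _ _ => rfl)

lemma fwt_add (g h : ℕ →₀ ℕ) : fwt (g + h) = fwt g + fwt h :=
  Finsupp.sum_add_index' (fun i => mul_zero i) (fun i b c => mul_add i b c)

lemma fct_single (i c : ℕ) : fct (Finsupp.single i c) = c := Finsupp.sum_single_index rfl

lemma fwt_single (i c : ℕ) : fwt (Finsupp.single i c) = i * c :=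
  Finsupp.sum_single_index (mul_zero i)

lemma fct_upg (g : ℕ →₀ ℕ) : fct (upg g) = fct g := by
  rw [fct, upg, Finsupp.sum_embDomain]; rfl

lemma fwt_upg (g : ℕ →₀ ℕ) : fwt (upg g) = fwt g + fct g := by
  rw [fwt, upg, Finsupp.sum_embDomain]
  show (g.sum fun i v => (i + 1) * v) = _
  simp only [add_mul, one_mul]
  exact Finset.sum_add_distrib

lemma fwt_apply_le (g : ℕ →₀ ℕ) (i : ℕ) : i * g i ≤ fwt g := by
  by_cases h : g i = 0
  · simp [h]
  · exact Finset.single_le_sum (f := fun j => j * g j) (fun _ _ => Nat.zero_le _)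
      (Finsupp.mem_support_iff.2 h)

/-! ### the lift map -/

noncomputable def lift (c r : ℕ) (p : (ℕ →₀ ℕ) × (ℕ →₀ ℕ)) : (ℕ →₀ ℕ) × (ℕ →₀ ℕ) :=
  (upg p.1 + Finsupp.single 1 c, upg p.2 + Finsupp.single 1 r)

lemma lift1_zero (c r : ℕ) (p : (ℕ →₀ ℕ) × (ℕ →₀ ℕ)) : (lift c r p).1 0 = 0 := by
  simp [lift, upg_zero, Finsupp.single_eq_of_ne (by norm_num : (1:ℕ) ≠ 0)]

lemma lift2_zero (c r : ℕ) (p : (ℕ →₀ ℕ) × (ℕ →₀ ℕ)) : (lift c r p).2 0 = 0 := by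
  simp [lift, upg_zero, Finsupp.single_eq_of_ne (by norm_num : (1:ℕ) ≠ 0)]

lemma lift1_one (c r : ℕ) (p : (ℕ →₀ ℕ) × (ℕ →₀ ℕ)) : (lift c r p).1 1 = p.1 0 + c := by
  have h := upg_succ p.1 0
  simp only [lift, Finsupp.add_apply, Finsupp.single_eq_same]
  rw [show (1:ℕ) = 0 + 1 from rfl, h]

lemma lift2_one (c r : ℕ) (p : (ℕ →₀ ℕ) × (ℕ →₀ ℕ)) : (lift c r p).2 1 = p.2 0 + r := by
  have h := upg_succ p.2 0
  simp only [lift, Finsupp.add_apply, Finsupp.single_eq_same]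
  rw [show (1:ℕ) = 0 + 1 from rfl, h]

lemma lift1_add2 (c r : ℕ) (p : (ℕ →₀ ℕ) × (ℕ →₀ ℕ)) (i : ℕ) :
    (lift c r p).1 (i + 2) = p.1 (i + 1) := by
  simp only [lift, Finsupp.add_apply,
    Finsupp.single_eq_of_ne' (by omega : (1:ℕ) ≠ i + 2)]
  rw [show i + 2 = (i + 1) + 1 from rfl, upg_succ, add_zero]

lemma lift2_add2 (c r : ℕ) (p : (ℕ →₀ ℕ) × (ℕ →₀ ℕ)) (i : ℕ) :
    (lift c r p).2 (i + 2) = p.2 (i + 1) := by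
  simp only [lift, Finsupp.add_apply,
    Finsupp.single_eq_of_ne' (by omega : (1:ℕ) ≠ i + 2)]
  rw [show i + 2 = (i + 1) + 1 from rfl, upg_succ, add_zero]

lemma opParts_lift (c r : ℕ) (p : (ℕ →₀ ℕ) × (ℕ →₀ ℕ)) :
    opParts (lift c r p) = opParts p + (c + r) := by
  simp only [opParts_eq, lift, fct_add, fct_upg, fct_single]; ring

lemma opWt_lift (c r : ℕ) (p : (ℕ →₀ ℕ) × (ℕ →₀ ℕ)) :
    opWt (lift c r p) = opWt p + opParts p + (c + r) := by
  simp only [opWt_eq, opParts_eq, lift, fwt_add, fwt_upg, fwt_single, one_mul]; ring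

lemma dng_lift (g : ℕ →₀ ℕ) (h0 : g 0 = 0) (c : ℕ) :
    dng (upg g + Finsupp.single 1 c) = g := by
  ext i
  cases i with
  | zero => rw [dng_zero, h0]
  | succ i =>
    rw [dng_succ, Finsupp.add_apply,
      Finsupp.single_eq_of_ne' (by omega : (1:ℕ) ≠ i + 2),
      show i + 2 = (i + 1) + 1 from rfl, upg_succ, add_zero]

lemma lift_dng (p : (ℕ →₀ ℕ) × (ℕ →₀ ℕ)) (h1 : p.1 0 = 0) (h2 : p.2 0 = 0) :
    lift (p.1 1) (p.2 1) (dng p.1, dng p.2) = p := by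
  have key : ∀ (g : ℕ →₀ ℕ), g 0 = 0 → upg (dng g) + Finsupp.single 1 (g 1) = g := by
    intro g hg
    ext i
    match i with
    | 0 => simp [upg_zero, Finsupp.single_eq_of_ne (by norm_num : (1:ℕ) ≠ 0), hg]
    | 1 =>
      rw [Finsupp.add_apply, Finsupp.single_eq_same, show (1:ℕ) = 0 + 1 from rfl, upg_succ,
        dng_zero, zero_add]
    | (i+2) =>
      rw [Finsupp.add_apply, Finsupp.single_eq_of_ne' (by omega : (1:ℕ) ≠ i + 2),
        show i + 2 = (i + 1) + 1 from rfl, upg_succ, dng_succ, add_zero]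
  exact Prod.ext (key p.1 h1) (key p.2 h2)


/-! ### key arithmetic -/

lemma keyArith (d' e' f' b r v1 v2 t : ℕ) (hfe : f' ≤ e') (hed : e' ≤ d') (hr : r ≤ 1)
    (hv2 : v2 ≤ 1) (ht : v1 + v2 = (d' + 1) * t) :
    (f' + (d' + 1) * r + v1 ≤ (d' + 1) * b + e' + d' * v2) ↔
      (v1 + 1 ≤ (d' + 1) * (b + 1 - r) + d' * v2) := by
  have hmono : ∀ u w : ℕ, u ≤ w → (d' + 1) * u ≤ (d' + 1) * w :=
    fun u w h => Nat.mul_le_mul_left _ h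
  have hlt : ∀ u w : ℕ, (d' + 1) * u < (d' + 1) * w → u < w := by
    intro u w h
    exact lt_of_mul_lt_mul_left h (Nat.zero_le _)
  interval_cases r <;> interval_cases v2 <;>
    simp only [Nat.add_sub_cancel, Nat.sub_zero, mul_zero, mul_one, add_zero] at ht ⊢ <;>
    constructor <;> intro h
  · -- r=0, v2=0, →
    have e1 : (d' + 1) * (b + 1) = (d' + 1) * b + (d' + 1) := by ring
    linarith
  · -- r=0, v2=0, ←
    have e1 : (d' + 1) * t < (d' + 1) * (b + 1) := by linarith
    have e2 := hmono _ _ (Nat.lt_succ_iff.mp (hlt _ _ e1))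
    linarith
  · -- r=0, v2=1, →
    have e1 : (d' + 1) * (b + 1) = (d' + 1) * b + d' + 1 := by ring
    linarith
  · -- r=0, v2=1, ←
    have e0 : (d' + 1) * (b + 2) = (d' + 1) * (b + 1) + d' + 1 := by ring
    have e1 : (d' + 1) * t < (d' + 1) * (b + 2) := by linarith
    have e2 := hmono _ _ (Nat.lt_succ_iff.mp (hlt _ _ e1))
    have e3 : (d' + 1) * (b + 1) = (d' + 1) * b + d' + 1 := by ring
    linarith
  · -- r=1, v2=0, →
    linarith
  · -- r=1, v2=0, ←
    have e1 : (d' + 1) * t < (d' + 1) * b := by linarith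
    have e2 := hmono _ _ (Nat.succ_le_iff.mpr (hlt _ _ e1))
    have e3 : (d' + 1) * (t + 1) = (d' + 1) * t + d' + 1 := by ring
    linarith
  · -- r=1, v2=1, →
    linarith
  · -- r=1, v2=1, ←
    have e1 : (d' + 1) * t < (d' + 1) * (b + 1) := by
      have : (d' + 1) * (b + 1) = (d' + 1) * b + d' + 1 := by ring
      linarith
    have e2 := hmono _ _ (Nat.lt_succ_iff.mp (hlt _ _ e1))
    linarith


/-! ### membership transfer -/

lemma mem_bwd (d' e' f' a b r : ℕ) (hfe : f' ≤ e') (hed : e' ≤ d') (hr : r ≤ 1)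
    (p' : (ℕ →₀ ℕ) × (ℕ →₀ ℕ)) (h1 : IsOverPtn p')
    (h2 : ubarCond (d' + 1) ((d' + 1) * (a + b) + (e' + 1)) ((d' + 1) * (b + 1 - r)) p') :
    IsOverPtn (lift ((d' + 1) * a + f' + d' * r) r p') ∧
      uCond (d' + 1) ((d' + 1) * (a + b) + (e' + 1)) ((d' + 1) * a + (f' + 1))
        (lift ((d' + 1) * a + f' + d' * r) r p') ∧
      (lift ((d' + 1) * a + f' + d' * r) r p').2 1 = r ∧
      (lift ((d' + 1) * a + f' + d' * r) r p').1 1 = (d' + 1) * a + f' + d' * r := by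
  obtain ⟨ho1, ho2, ho3⟩ := h1
  obtain ⟨hb1, hb2, hb3, hb4⟩ := h2
  set c := (d' + 1) * a + f' + d' * r with hc
  set P := lift c r p' with hP
  simp only [show d' + 1 - 1 = d' from rfl] at hb1 hb2 ⊢
  have hP1z : P.1 0 = 0 := lift1_zero c r p'
  have hP2z : P.2 0 = 0 := lift2_zero c r p'
  have hP11 : P.1 1 = c := by rw [hP, lift1_one, ho1, zero_add]
  have hP21 : P.2 1 = r := by rw [hP, lift2_one, ho2, zero_add]
  have hP1s : ∀ i, P.1 (i + 2) = p'.1 (i + 1) := lift1_add2 c r p'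
  have hP2s : ∀ i, P.2 (i + 2) = p'.2 (i + 1) := lift2_add2 c r p'
  have hab : (d' + 1) * (a + b) = (d' + 1) * a + (d' + 1) * b := by ring
  refine ⟨⟨hP1z, hP2z, ?_⟩, ⟨?_, ?_, ?_, ?_⟩, hP21, hP11⟩
  · -- overlined multiplicities ≤ 1
    intro i
    match i with
    | 0 => rw [hP2z]; omega
    | 1 => rw [hP21]; exact hr
    | (i+2) => rw [hP2s]; exact ho3 (i+1)
  · -- (i)
    rw [hP11, hP21]
    show c + 1 ≤ (d' + 1) * a + (f' + 1) + d' * r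
    rw [hc]
    exact le_of_eq (by ring)
  · -- (ii)
    intro l
    match l with
    | 0 =>
      show d' * P.2 1 ≤ P.1 1
      rw [hP11, hP21, hc]
      exact Nat.le_add_left _ _
    | (l+1) =>
      have h3 : 2 * (l + 1) + 1 = (2 * l + 1) + 2 := by ring
      rw [h3, hP1s, hP2s]
      exact hb2 l
  · -- (iii)
    intro l
    have h3 : 2 * l + 2 = (2 * l) + 2 := rfl
    rw [h3, hP1s, hP2s]
    exact hb3 l
  · -- (iv)
    intro l hl
    match l, hl with
    | 1, _ =>
      show P.1 1 + P.2 1 + P.1 (0 + 2) + 1 ≤ _ + d' * P.2 (0 + 2)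
      rw [hP11, hP21, hP1s, hP2s]
      obtain ⟨t, ht⟩ := hb3 0
      have hA := (keyArith d' e' f' b r (p'.1 1) (p'.2 1) t hfe hed hr (ho3 1) ht).mpr hb1
      rw [hc]
      linarith
    | (l+2), _ =>
      show P.1 (l + 2) + P.2 (l + 2) + P.1 ((l + 1) + 2) + 1 ≤ _ + d' * P.2 ((l + 1) + 2)
      rw [hP1s, hP2s, hP1s, hP2s]
      exact hb4 (l + 1) (by omega)

lemma mem_fwd (d' e' f' a b r : ℕ) (hfe : f' ≤ e') (hed : e' ≤ d') (hr : r ≤ 1)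
    (p : (ℕ →₀ ℕ) × (ℕ →₀ ℕ)) (h1 : IsOverPtn p)
    (h2 : uCond (d' + 1) ((d' + 1) * (a + b) + (e' + 1)) ((d' + 1) * a + (f' + 1)) p)
    (h3 : p.2 1 = r) (h4 : p.1 1 = (d' + 1) * a + f' + d' * r) :
    IsOverPtn (dng p.1, dng p.2) ∧
      ubarCond (d' + 1) ((d' + 1) * (a + b) + (e' + 1)) ((d' + 1) * (b + 1 - r))
        (dng p.1, dng p.2) := by
  obtain ⟨ho1, ho2, ho3⟩ := h1
  obtain ⟨hu1, hu2, hu3, hu4⟩ := h2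
  simp only [show d' + 1 - 1 = d' from rfl] at hu1 hu2 hu4 ⊢
  have hab : (d' + 1) * (a + b) = (d' + 1) * a + (d' + 1) * b := by ring
  refine ⟨⟨dng_zero _, dng_zero _, ?_⟩, ?_, ?_, ?_, ?_⟩
  · intro i
    match i with
    | 0 => rw [dng_zero]; omega
    | (i+1) => rw [dng_succ]; exact ho3 (i+2)
  · -- (ī)
    show dng p.1 (0 + 1) + 1 ≤ _ + d' * dng p.2 (0 + 1)
    rw [dng_succ, dng_succ]
    obtain ⟨t, ht⟩ := hu3 0
    refine (keyArith d' e' f' b r (p.1 2) (p.2 2) t hfe hed hr (ho3 2) ht).mp ?_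
    have := hu4 1 le_rfl
    rw [h4, h3] at this
    have h12 : (1:ℕ) + 1 = 2 := rfl
    rw [h12] at this
    linarith
  · -- (iī)
    intro l
    show d' * dng p.2 ((2 * l + 1) + 1) ≤ dng p.1 ((2 * l + 1) + 1)
    rw [dng_succ, dng_succ]
    have h5 : 2 * l + 1 + 2 = 2 * (l + 1) + 1 := by ring
    rw [h5]
    exact hu2 (l + 1)
  · -- (iiī)
    intro l
    show (d' + 1) ∣ dng p.1 ((2 * l) + 1) + dng p.2 ((2 * l) + 1)
    rw [dng_succ, dng_succ]
    exact hu3 l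
  · -- (iv̄)
    intro l hl
    match l, hl with
    | (l+1), _ =>
      show dng p.1 (l + 1) + dng p.2 (l + 1) + dng p.1 ((l + 1) + 1) + 1 ≤
        _ + d' * dng p.2 ((l + 1) + 1)
      rw [dng_succ, dng_succ, show (l+1)+1 = (l+1)+1 from rfl, dng_succ, dng_succ]
      have := hu4 (l + 2) (by omega)
      simpa using this

/-! ### the bijection -/

noncomputable def caseEquiv (d' e' f' a b r : ℕ) (hfe : f' ≤ e') (hed : e' ≤ d') (hr : r ≤ 1) :
    ↥{p' : (ℕ →₀ ℕ) × (ℕ →₀ ℕ) | IsOverPtn p' ∧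
        ubarCond (d' + 1) ((d' + 1) * (a + b) + (e' + 1)) ((d' + 1) * (b + 1 - r)) p'} ≃
      ↥{p : (ℕ →₀ ℕ) × (ℕ →₀ ℕ) | IsOverPtn p ∧
        uCond (d' + 1) ((d' + 1) * (a + b) + (e' + 1)) ((d' + 1) * a + (f' + 1)) p ∧
        p.2 1 = r ∧ p.1 1 = (d' + 1) * a + f' + d' * r} where
  toFun p' := ⟨lift ((d' + 1) * a + f' + d' * r) r p'.1,
    mem_bwd d' e' f' a b r hfe hed hr p'.1 p'.2.1 p'.2.2⟩
  invFun p := ⟨(dng p.1.1, dng p.1.2),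
    mem_fwd d' e' f' a b r hfe hed hr p.1 p.2.1 p.2.2.1 p.2.2.2.1 p.2.2.2.2⟩
  left_inv p' := by
    apply Subtype.ext
    obtain ⟨ho1, ho2, ho3⟩ := p'.2.1
    exact Prod.ext (dng_lift _ ho1 _) (dng_lift _ ho2 _)
  right_inv p := by
    apply Subtype.ext
    obtain ⟨⟨ho1, ho2, ho3⟩, hu, h21, h11⟩ := p.2
    have := lift_dng p.1 ho1 ho2
    rw [h21, h11] at this
    exact this

/-! ### set decomposition -/

lemma decomp (d' NN base : ℕ) :
    {p : (ℕ →₀ ℕ) × (ℕ →₀ ℕ) | IsOverPtn p ∧ uCond (d' + 1) NN (base + 1) p} =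
      {p : (ℕ →₀ ℕ) × (ℕ →₀ ℕ) | IsOverPtn p ∧ uCond (d' + 1) NN base p} ∪
        ({p : (ℕ →₀ ℕ) × (ℕ →₀ ℕ) | IsOverPtn p ∧ uCond (d' + 1) NN (base + 1) p ∧
            p.2 1 = 0 ∧ p.1 1 = base + d' * 0} ∪
          {p : (ℕ →₀ ℕ) × (ℕ →₀ ℕ) | IsOverPtn p ∧ uCond (d' + 1) NN (base + 1) p ∧
            p.2 1 = 1 ∧ p.1 1 = base + d' * 1}) := by
  ext p
  simp only [Set.mem_setOf_eq, Set.mem_union]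
  constructor
  · rintro ⟨hov, hu⟩
    by_cases hle : p.1 1 + 1 ≤ base + (d' + 1 - 1) * p.2 1
    · exact Or.inl ⟨hov, hle, hu.2.1, hu.2.2.1, hu.2.2.2⟩
    · have h21 := hov.2.2 1
      have hi := hu.1
      simp only [show d' + 1 - 1 = d' from rfl] at hle hi
      interval_cases h : (p.2 1)
      · simp only [mul_zero, add_zero] at hle hi
        exact Or.inr (Or.inl ⟨hov, hu, rfl, by omega⟩)
      · simp only [mul_one] at hle hi
        exact Or.inr (Or.inr ⟨hov, hu, rfl, by omega⟩)
  · rintro (⟨hov, hu⟩ | ⟨hov, hu, h2, h1⟩ | ⟨hov, hu, h2, h1⟩)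
    · exact ⟨hov, by
        have := hu.1
        exact le_trans this (by omega), hu.2.1, hu.2.2.1, hu.2.2.2⟩
    · exact ⟨hov, hu⟩
    · exact ⟨hov, hu⟩

lemma disj1 (d' NN base : ℕ) :
    Disjoint {p : (ℕ →₀ ℕ) × (ℕ →₀ ℕ) | IsOverPtn p ∧ uCond (d' + 1) NN base p}
      ({p : (ℕ →₀ ℕ) × (ℕ →₀ ℕ) | IsOverPtn p ∧ uCond (d' + 1) NN (base + 1) p ∧
          p.2 1 = 0 ∧ p.1 1 = base + d' * 0} ∪
        {p : (ℕ →₀ ℕ) × (ℕ →₀ ℕ) | IsOverPtn p ∧ uCond (d' + 1) NN (base + 1) p ∧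
          p.2 1 = 1 ∧ p.1 1 = base + d' * 1}) := by
  rw [Set.disjoint_left]
  rintro p ⟨hov, hu⟩ (⟨_, _, h2, h1⟩ | ⟨_, _, h2, h1⟩) <;>
  · have := hu.1
    simp only [show d' + 1 - 1 = d' from rfl, h2, h1] at this
    omega

lemma disj2 (d' NN base : ℕ) :
    Disjoint {p : (ℕ →₀ ℕ) × (ℕ →₀ ℕ) | IsOverPtn p ∧ uCond (d' + 1) NN (base + 1) p ∧
          p.2 1 = 0 ∧ p.1 1 = base + d' * 0}
        {p : (ℕ →₀ ℕ) × (ℕ →₀ ℕ) | IsOverPtn p ∧ uCond (d' + 1) NN (base + 1) p ∧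
          p.2 1 = 1 ∧ p.1 1 = base + d' * 1} := by
  rw [Set.disjoint_left]
  rintro p ⟨_, _, h2, _⟩ ⟨_, _, h2', _⟩
  omega


/-! ### summability -/

open scoped ENNReal NNReal

open Classical in
noncomputable def Fbdd (s : ℝ≥0) (Nb : ℕ) (g : ℕ →₀ ℕ) : ℝ≥0∞ :=
  if g 0 = 0 ∧ ∀ i, Nb < i → g i = 0 then (s : ℝ≥0∞) ^ fwt g else 0

lemma Fbdd_zero (s : ℝ≥0) : ∑' g : ℕ →₀ ℕ, Fbdd s 0 g = 1 := by
  rw [tsum_eq_single (0 : ℕ →₀ ℕ)]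
  · have hcond : (0 : ℕ →₀ ℕ) 0 = 0 ∧ ∀ i, (0:ℕ) < i → (0 : ℕ →₀ ℕ) i = 0 :=
      ⟨rfl, fun i _ => rfl⟩
    rw [Fbdd, if_pos hcond]
    simp [fwt]
  · intro g hg
    rw [Fbdd, if_neg]
    rintro ⟨h0, hi⟩
    apply hg
    ext i
    cases i with
    | zero => exact h0
    | succ i => exact hi _ (Nat.succ_pos i)

lemma Fbdd_step (s : ℝ≥0) (Nb : ℕ) :
    ∑' g : ℕ →₀ ℕ, Fbdd s (Nb + 1) g ≤
      (1 - (s : ℝ≥0∞) ^ (Nb + 1))⁻¹ * ∑' g : ℕ →₀ ℕ, Fbdd s Nb g := by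
  have hρ : Function.Injective
      (fun g : ℕ →₀ ℕ => ((g.erase (Nb + 1), g (Nb + 1)) : (ℕ →₀ ℕ) × ℕ)) := by
    intro g h he
    have h1 : g.erase (Nb + 1) = h.erase (Nb + 1) := congrArg Prod.fst he
    have h2 : g (Nb + 1) = h (Nb + 1) := congrArg Prod.snd he
    have e := Finsupp.erase_add_single (Nb + 1) g
    rw [← e, h1, h2, Finsupp.erase_add_single]
  have hfact : ∀ g : ℕ →₀ ℕ,
      Fbdd s (Nb + 1) g = Fbdd s Nb (g.erase (Nb + 1)) * (s : ℝ≥0∞) ^ ((Nb + 1) * g (Nb + 1)) := by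
    intro g
    by_cases hg : g 0 = 0 ∧ ∀ i, Nb + 1 < i → g i = 0
    · rw [Fbdd, if_pos hg, Fbdd, if_pos, ← pow_add]
      · congr 1
        have hsplit := fwt_add (g.erase (Nb + 1)) (Finsupp.single (Nb + 1) (g (Nb + 1)))
        rw [Finsupp.erase_add_single, fwt_single] at hsplit
        omega
      · refine ⟨?_, ?_⟩
        · rw [Finsupp.erase_ne (by omega : (0 : ℕ) ≠ Nb + 1)]; exact hg.1
        · intro i hi
          rcases eq_or_ne i (Nb + 1) with rfl | hne
          · exact Finsupp.erase_same
          · rw [Finsupp.erase_ne hne]; exact hg.2 i (by omega)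
    · rw [Fbdd, if_neg hg, Fbdd, if_neg, zero_mul]
      rintro ⟨h0, hi⟩
      apply hg
      refine ⟨?_, ?_⟩
      · rw [← Finsupp.erase_ne (by omega : (0 : ℕ) ≠ Nb + 1)]; exact h0
      · intro i hii
        rw [← Finsupp.erase_ne (by omega : i ≠ Nb + 1)]
        exact hi i (by omega)
  calc ∑' g : ℕ →₀ ℕ, Fbdd s (Nb + 1) g
      = ∑' g : ℕ →₀ ℕ, (fun z : (ℕ →₀ ℕ) × ℕ => Fbdd s Nb z.1 * (s : ℝ≥0∞) ^ ((Nb + 1) * z.2))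
          ((fun g : ℕ →₀ ℕ => ((g.erase (Nb + 1), g (Nb + 1)) : (ℕ →₀ ℕ) × ℕ)) g) :=
        tsum_congr hfact
    _ ≤ ∑' z : (ℕ →₀ ℕ) × ℕ, Fbdd s Nb z.1 * (s : ℝ≥0∞) ^ ((Nb + 1) * z.2) :=
        ENNReal.tsum_comp_le_tsum_of_injective hρ _
    _ = (∑' g : ℕ →₀ ℕ, Fbdd s Nb g) * ∑' v : ℕ, ((s : ℝ≥0∞) ^ (Nb + 1)) ^ v := by
        rw [ENNReal.tsum_prod']
        simp_rw [pow_mul, ENNReal.tsum_mul_left, ENNReal.tsum_mul_right]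
    _ = (1 - (s : ℝ≥0∞) ^ (Nb + 1))⁻¹ * ∑' g : ℕ →₀ ℕ, Fbdd s Nb g := by
        rw [ENNReal.tsum_geometric]; ring

lemma inv_le_ofReal (s : ℝ≥0) (hs : s < 1) (Nb : ℕ) :
    (1 - (s : ℝ≥0∞) ^ (Nb + 1))⁻¹ ≤
      ENNReal.ofReal (1 + (s : ℝ) ^ (Nb + 1) * (1 - (s : ℝ))⁻¹) := by
  set t : ℝ≥0 := s ^ (Nb + 1) with htdef
  have hts : t ≤ s := by
    rw [htdef]
    calc s ^ (Nb + 1) ≤ s ^ 1 := pow_le_pow_of_le_one (by positivity) hs.le (by omega)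
      _ = s := pow_one s
  have ht1 : t < 1 := lt_of_le_of_lt hts hs
  have hcoe : (s : ℝ≥0∞) ^ (Nb + 1) = ((t : ℝ≥0) : ℝ≥0∞) := by
    rw [htdef, ENNReal.coe_pow]
  rw [hcoe, show (1 : ℝ≥0∞) = ((1 : ℝ≥0) : ℝ≥0∞) from rfl, ← ENNReal.coe_sub, ← ENNReal.coe_inv
    (by simpa using (tsub_pos_of_lt ht1).ne'), ← ENNReal.ofReal_coe_nnreal]
  apply ENNReal.ofReal_le_ofReal
  have hc1 : ((1 - t : ℝ≥0) : ℝ) = 1 - (t : ℝ) := by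
    rw [NNReal.coe_sub ht1.le, NNReal.coe_one]
  rw [NNReal.coe_inv, hc1]
  have hs0 : (0 : ℝ) < 1 - (s : ℝ) := by
    have : (s : ℝ) < 1 := hs
    linarith
  have ht0 : (0 : ℝ) < 1 - (t : ℝ) := by
    have : (t : ℝ) < 1 := ht1
    linarith
  have htsR : (t : ℝ) ≤ (s : ℝ) := hts
  have htR : (t : ℝ) = (s : ℝ) ^ (Nb + 1) := by rw [htdef]; push_cast; ring
  rw [← htR, inv_eq_one_div, div_le_iff₀ ht0]
  have e1 : (1 - (s : ℝ)) * (1 - (s : ℝ))⁻¹ = 1 := mul_inv_cancel₀ hs0.ne'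
  have e2 : (0 : ℝ) ≤ (t : ℝ) := t.coe_nonneg
  nlinarith [mul_le_mul_of_nonneg_left htsR (inv_pos.mpr hs0).le,
    mul_nonneg e2 (inv_pos.mpr hs0).le]

lemma Fbdd_bound (s : ℝ≥0) (hs : s < 1) (Nb : ℕ) :
    ∑' g : ℕ →₀ ℕ, Fbdd s Nb g ≤
      ENNReal.ofReal (Real.exp ((1 - (s : ℝ))⁻¹ * (1 - (s : ℝ))⁻¹)) := by
  set c : ℝ := (1 - (s : ℝ))⁻¹ with hcdef
  have hs0 : (0 : ℝ) < 1 - (s : ℝ) := by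
    have : (s : ℝ) < 1 := hs
    linarith
  have hc0 : 0 ≤ c := (inv_pos.mpr hs0).le
  have main : ∀ N : ℕ, ∑' g : ℕ →₀ ℕ, Fbdd s N g ≤
      ENNReal.ofReal (Real.exp (∑ j ∈ Finset.range N, (s : ℝ) ^ (j + 1) * c)) := by
    intro N
    induction N with
    | zero => simp [Fbdd_zero]
    | succ N ih =>
      calc ∑' g : ℕ →₀ ℕ, Fbdd s (N + 1) g
          ≤ (1 - (s : ℝ≥0∞) ^ (N + 1))⁻¹ * ∑' g : ℕ →₀ ℕ, Fbdd s N g := Fbdd_step s N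
        _ ≤ ENNReal.ofReal (1 + (s : ℝ) ^ (N + 1) * c) *
            ENNReal.ofReal (Real.exp (∑ j ∈ Finset.range N, (s : ℝ) ^ (j + 1) * c)) :=
            mul_le_mul' (inv_le_ofReal s hs N) ih
        _ = ENNReal.ofReal ((1 + (s : ℝ) ^ (N + 1) * c) *
            Real.exp (∑ j ∈ Finset.range N, (s : ℝ) ^ (j + 1) * c)) := by
            rw [ENNReal.ofReal_mul]
            positivity
        _ ≤ ENNReal.ofReal (Real.exp ((s : ℝ) ^ (N + 1) * c) *
            Real.exp (∑ j ∈ Finset.range N, (s : ℝ) ^ (j + 1) * c)) := by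
            apply ENNReal.ofReal_le_ofReal
            apply mul_le_mul_of_nonneg_right _ (Real.exp_pos _).le
            have := Real.add_one_le_exp ((s : ℝ) ^ (N + 1) * c)
            linarith
        _ = ENNReal.ofReal (Real.exp (∑ j ∈ Finset.range (N + 1), (s : ℝ) ^ (j + 1) * c)) := by
            rw [← Real.exp_add, Finset.sum_range_succ, pow_succ]
            exact congrArg ENNReal.ofReal (congrArg Real.exp (by ring))
  refine le_trans (main Nb) (ENNReal.ofReal_le_ofReal (Real.exp_le_exp.mpr ?_))
  have hgeom : ∑ j ∈ Finset.range Nb, (s : ℝ) ^ (j + 1) ≤ c := by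
    have h1 : ∀ j ∈ Finset.range Nb, (s : ℝ) ^ (j + 1) ≤ (s : ℝ) ^ j := by
      intro j _
      rw [pow_succ]
      nlinarith [pow_nonneg s.coe_nonneg j, s.coe_nonneg, (show (s:ℝ) ≤ 1 from hs.le)]
    calc ∑ j ∈ Finset.range Nb, (s : ℝ) ^ (j + 1) ≤ ∑ j ∈ Finset.range Nb, (s : ℝ) ^ j :=
          Finset.sum_le_sum h1
      _ ≤ ∑' j : ℕ, (s : ℝ) ^ j :=
          (summable_geometric_of_lt_one s.coe_nonneg hs).sum_le_tsum _
            (fun j _ => pow_nonneg s.coe_nonneg j)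
      _ = c := by rw [tsum_geometric_of_lt_one s.coe_nonneg hs]
  calc ∑ j ∈ Finset.range Nb, (s : ℝ) ^ (j + 1) * c
      = (∑ j ∈ Finset.range Nb, (s : ℝ) ^ (j + 1)) * c := by rw [Finset.sum_mul]
    _ ≤ c * c := mul_le_mul_of_nonneg_right hgeom hc0

lemma gfinite (s : ℝ≥0) (hs : s < 1) :
    (∑' g : ℕ →₀ ℕ, if g 0 = 0 then (s : ℝ≥0∞) ^ fwt g else 0) ≠ ⊤ := by
  refine ne_top_of_le_ne_top
    (ENNReal.ofReal_ne_top (r := Real.exp ((1 - (s : ℝ))⁻¹ * (1 - (s : ℝ))⁻¹))) ?_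
  rw [ENNReal.tsum_eq_iSup_sum]
  refine iSup_le fun A => ?_
  set Nb := A.sup (fun g : ℕ →₀ ℕ => g.support.sup id) with hNb
  have hA : ∀ g ∈ A, (if g 0 = 0 then (s : ℝ≥0∞) ^ fwt g else 0) ≤ Fbdd s Nb g := by
    intro g hg
    by_cases h0 : g 0 = 0
    · have hcond : g 0 = 0 ∧ ∀ i, Nb < i → g i = 0 := by
        refine ⟨h0, fun i hi => ?_⟩
        by_contra hne
        have hmem : i ∈ g.support := Finsupp.mem_support_iff.2 hne
        have h1 : i ≤ g.support.sup id := Finset.le_sup (f := id) hmem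
        have h2 : g.support.sup id ≤ Nb :=
          Finset.le_sup (f := fun g : ℕ →₀ ℕ => g.support.sup id) hg
        omega
      rw [if_pos h0, Fbdd, if_pos hcond]
    · rw [if_neg h0]; exact zero_le
  calc ∑ g ∈ A, (if g 0 = 0 then (s : ℝ≥0∞) ^ fwt g else 0)
      ≤ ∑ g ∈ A, Fbdd s Nb g := Finset.sum_le_sum hA
    _ ≤ ∑' g : ℕ →₀ ℕ, Fbdd s Nb g := ENNReal.sum_le_tsum A
    _ ≤ _ := Fbdd_bound s hs Nb


lemma master_summable (S : Set ((ℕ →₀ ℕ) × (ℕ →₀ ℕ))) (hS : ∀ p ∈ S, IsOverPtn p)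
    {x q : ℂ} (hx : ‖x‖ ≤ 1) (hq : ‖q‖ < 1) :
    Summable (fun p : ↥S => x ^ opParts (p : (ℕ →₀ ℕ) × (ℕ →₀ ℕ)) *
      q ^ opWt (p : (ℕ →₀ ℕ) × (ℕ →₀ ℕ))) := by
  classical
  set r : ℝ≥0 := ‖q‖₊ with hrdef
  have hrq : (r : ℝ) = ‖q‖ := rfl
  have hr1 : r < 1 := by
    rw [← NNReal.coe_lt_coe, hrq, NNReal.coe_one]
    exact hq
  set s : ℝ≥0 := NNReal.sqrt r with hsdef
  have hs1 : s < 1 := by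
    rw [hsdef, show (1 : ℝ≥0) = NNReal.sqrt 1 by simp]
    exact NNReal.sqrt_lt_sqrt.mpr hr1
  have hss : (s : ℝ≥0∞) * (s : ℝ≥0∞) = (r : ℝ≥0∞) := by
    rw [← ENNReal.coe_mul, NNReal.mul_self_sqrt]
  have key : Summable (fun p : ↥S => r ^ opWt (p : (ℕ →₀ ℕ) × (ℕ →₀ ℕ))) := by
    rw [← ENNReal.tsum_coe_ne_top_iff_summable]
    set Φ : ↥S → (ℕ →₀ ℕ) := fun p =>
      (p : (ℕ →₀ ℕ) × (ℕ →₀ ℕ)).1 + (p : (ℕ →₀ ℕ) × (ℕ →₀ ℕ)).1 +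
        (p : (ℕ →₀ ℕ) × (ℕ →₀ ℕ)).2 with hΦ
    have hinj : Function.Injective Φ := by
      intro p p' h
      obtain ⟨h1, h2, h3⟩ := hS p p.2
      obtain ⟨h1', h2', h3'⟩ := hS p' p'.2
      apply Subtype.ext
      have happ : ∀ i, (p : (ℕ →₀ ℕ) × (ℕ →₀ ℕ)).1 i + (p : (ℕ →₀ ℕ) × (ℕ →₀ ℕ)).1 i +
          (p : (ℕ →₀ ℕ) × (ℕ →₀ ℕ)).2 i = (p' : (ℕ →₀ ℕ) × (ℕ →₀ ℕ)).1 i +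
          (p' : (ℕ →₀ ℕ) × (ℕ →₀ ℕ)).1 i + (p' : (ℕ →₀ ℕ) × (ℕ →₀ ℕ)).2 i := by
        intro i
        have := DFunLike.congr_fun h i
        simpa [hΦ, Finsupp.add_apply] using this
      have c1 : ∀ i, (p : (ℕ →₀ ℕ) × (ℕ →₀ ℕ)).1 i = (p' : (ℕ →₀ ℕ) × (ℕ →₀ ℕ)).1 i := by
        intro i; have := happ i; have := h3 i; have := h3' i; omega
      have c2 : ∀ i, (p : (ℕ →₀ ℕ) × (ℕ →₀ ℕ)).2 i = (p' : (ℕ →₀ ℕ) × (ℕ →₀ ℕ)).2 i := by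
        intro i; have := happ i; have := h3 i; have := h3' i; omega
      exact Prod.ext (Finsupp.ext c1) (Finsupp.ext c2)
    have hle : ∀ p : ↥S, ((r ^ opWt (p : (ℕ →₀ ℕ) × (ℕ →₀ ℕ)) : ℝ≥0) : ℝ≥0∞) ≤
        (fun g : ℕ →₀ ℕ => if g 0 = 0 then (s : ℝ≥0∞) ^ fwt g else 0) (Φ p) := by
      intro p
      obtain ⟨h1, h2, h3⟩ := hS p p.2
      have hz : Φ p 0 = 0 := by simp [hΦ, Finsupp.add_apply, h1, h2]
      simp only
      rw [if_pos hz]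
      have hwt : fwt (Φ p) ≤ 2 * opWt (p : (ℕ →₀ ℕ) × (ℕ →₀ ℕ)) := by
        rw [hΦ]
        simp only
        rw [fwt_add, fwt_add, opWt_eq]
        omega
      calc ((r ^ opWt (p : (ℕ →₀ ℕ) × (ℕ →₀ ℕ)) : ℝ≥0) : ℝ≥0∞)
          = ((s : ℝ≥0∞) * s) ^ opWt (p : (ℕ →₀ ℕ) × (ℕ →₀ ℕ)) := by
            rw [hss, ENNReal.coe_pow]
        _ = (s : ℝ≥0∞) ^ (2 * opWt (p : (ℕ →₀ ℕ) × (ℕ →₀ ℕ))) := by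
            rw [two_mul, pow_add, mul_pow]
        _ ≤ (s : ℝ≥0∞) ^ fwt (Φ p) := by
            apply pow_le_pow_right_of_le_one' _ hwt
            exact_mod_cast hs1.le
    refine ne_top_of_le_ne_top (gfinite s hs1) ?_
    calc ∑' p : ↥S, ((r ^ opWt (p : (ℕ →₀ ℕ) × (ℕ →₀ ℕ)) : ℝ≥0) : ℝ≥0∞)
        ≤ ∑' p : ↥S, (fun g : ℕ →₀ ℕ => if g 0 = 0 then (s : ℝ≥0∞) ^ fwt g else 0) (Φ p) :=
          ENNReal.tsum_le_tsum hle
      _ ≤ _ := ENNReal.tsum_comp_le_tsum_of_injective hinj _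
  have keyR : Summable (fun p : ↥S => (r : ℝ) ^ opWt (p : (ℕ →₀ ℕ) × (ℕ →₀ ℕ))) := by
    have := NNReal.summable_coe.2 key
    simpa [NNReal.coe_pow] using this
  apply Summable.of_norm_bounded keyR
  intro p
  rw [norm_mul, norm_pow, norm_pow]
  have h1 : ‖x‖ ^ opParts (p : (ℕ →₀ ℕ) × (ℕ →₀ ℕ)) ≤ 1 :=
    pow_le_one₀ (norm_nonneg x) hx
  have h2 : (0:ℝ) ≤ ‖q‖ ^ opWt (p : (ℕ →₀ ℕ) × (ℕ →₀ ℕ)) := pow_nonneg (norm_nonneg q) _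
  calc ‖x‖ ^ opParts (p : (ℕ →₀ ℕ) × (ℕ →₀ ℕ)) * ‖q‖ ^ opWt (p : (ℕ →₀ ℕ) × (ℕ →₀ ℕ))
      ≤ 1 * ‖q‖ ^ opWt (p : (ℕ →₀ ℕ) × (ℕ →₀ ℕ)) := mul_le_mul_of_nonneg_right h1 h2
    _ = (r : ℝ) ^ opWt (p : (ℕ →₀ ℕ) × (ℕ →₀ ℕ)) := by rw [one_mul, hrq]


/-! ### generating function as a sum over overpartitions -/

lemma gf_eq (P : ((ℕ →₀ ℕ) × (ℕ →₀ ℕ)) → Prop) {x q : ℂ} (hx : ‖x‖ ≤ 1) (hq : ‖q‖ < 1) :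
    (∑' mn : ℕ × ℕ,
        (Set.ncard {p : (ℕ →₀ ℕ) × (ℕ →₀ ℕ) |
          IsOverPtn p ∧ opParts p = mn.1 ∧ opWt p = mn.2 ∧ P p} : ℂ) * x ^ mn.1 * q ^ mn.2) =
      ∑' p : ↥{p : (ℕ →₀ ℕ) × (ℕ →₀ ℕ) | IsOverPtn p ∧ P p},
        x ^ opParts (p : (ℕ →₀ ℕ) × (ℕ →₀ ℕ)) * q ^ opWt (p : (ℕ →₀ ℕ) × (ℕ →₀ ℕ)) := by
  have hsum := master_summable {p : (ℕ →₀ ℕ) × (ℕ →₀ ℕ) | IsOverPtn p ∧ P p}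
    (fun p hp => hp.1) hx hq
  set w : ↥{p : (ℕ →₀ ℕ) × (ℕ →₀ ℕ) | IsOverPtn p ∧ P p} → ℕ × ℕ :=
    fun p => (opParts (p : (ℕ →₀ ℕ) × (ℕ →₀ ℕ)), opWt (p : (ℕ →₀ ℕ) × (ℕ →₀ ℕ))) with hw
  have hfib := hsum.hasSum.tsum_fiberwise w
  rw [← hfib.tsum_eq]
  apply tsum_congr
  intro mn
  have hconst : ∀ b : ↥(w ⁻¹' {mn}),
      x ^ opParts ((b : ↥{p : (ℕ →₀ ℕ) × (ℕ →₀ ℕ) | IsOverPtn p ∧ P p}) :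
          (ℕ →₀ ℕ) × (ℕ →₀ ℕ)) *
        q ^ opWt ((b : ↥{p : (ℕ →₀ ℕ) × (ℕ →₀ ℕ) | IsOverPtn p ∧ P p}) :
          (ℕ →₀ ℕ) × (ℕ →₀ ℕ)) = x ^ mn.1 * q ^ mn.2 := by
    rintro ⟨b, hb⟩
    have h1 : w b = mn := hb
    have h2 : opParts (b : (ℕ →₀ ℕ) × (ℕ →₀ ℕ)) = mn.1 := congrArg Prod.fst h1
    have h3 : opWt (b : (ℕ →₀ ℕ) × (ℕ →₀ ℕ)) = mn.2 := congrArg Prod.snd h1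
    show x ^ opParts (b : (ℕ →₀ ℕ) × (ℕ →₀ ℕ)) * q ^ opWt (b : (ℕ →₀ ℕ) × (ℕ →₀ ℕ)) = _
    rw [h2, h3]
  rw [tsum_congr hconst, tsum_const]
  have hcard : Nat.card ↥(w ⁻¹' {mn}) =
      Set.ncard {p : (ℕ →₀ ℕ) × (ℕ →₀ ℕ) |
        IsOverPtn p ∧ opParts p = mn.1 ∧ opWt p = mn.2 ∧ P p} := by
    rw [← Nat.card_coe_set_eq]
    have fwd : ∀ b : ↥(w ⁻¹' {mn}),
        (b : ↥{p : (ℕ →₀ ℕ) × (ℕ →₀ ℕ) | IsOverPtn p ∧ P p}).1 ∈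
          {p : (ℕ →₀ ℕ) × (ℕ →₀ ℕ) |
            IsOverPtn p ∧ opParts p = mn.1 ∧ opWt p = mn.2 ∧ P p} := by
      rintro ⟨⟨b, hb⟩, hfb⟩
      have h1 : w ⟨b, hb⟩ = mn := hfb
      exact ⟨hb.1, congrArg Prod.fst h1, congrArg Prod.snd h1, hb.2⟩
    have bwd : ∀ p : ↥{p : (ℕ →₀ ℕ) × (ℕ →₀ ℕ) |
        IsOverPtn p ∧ opParts p = mn.1 ∧ opWt p = mn.2 ∧ P p},
        (⟨(p : (ℕ →₀ ℕ) × (ℕ →₀ ℕ)), ⟨p.2.1, p.2.2.2.2⟩⟩ :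
          ↥{p : (ℕ →₀ ℕ) × (ℕ →₀ ℕ) | IsOverPtn p ∧ P p}) ∈ w ⁻¹' {mn} := by
      rintro ⟨p, hp⟩
      exact Prod.ext hp.2.1 hp.2.2.1
    exact Nat.card_congr
      ⟨fun b => ⟨(b : ↥{p : (ℕ →₀ ℕ) × (ℕ →₀ ℕ) | IsOverPtn p ∧ P p}).1, fwd b⟩,
       fun p => ⟨⟨(p : (ℕ →₀ ℕ) × (ℕ →₀ ℕ)), ⟨p.2.1, p.2.2.2.2⟩⟩, bwd p⟩,
       fun b => by apply Subtype.ext; apply Subtype.ext; rfl,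
       fun p => rfl⟩
  rw [hcard, nsmul_eq_mul, mul_assoc]


/-! ### the case computation -/

lemma case_sum (d' e' f' a b r : ℕ) (hfe : f' ≤ e') (hed : e' ≤ d') (hr : r ≤ 1)
    {x q : ℂ} (hx : ‖x‖ ≤ 1) (hq : ‖q‖ < 1) :
    (∑' p : ↥{p : (ℕ →₀ ℕ) × (ℕ →₀ ℕ) | IsOverPtn p ∧
        uCond (d' + 1) ((d' + 1) * (a + b) + (e' + 1)) ((d' + 1) * a + (f' + 1)) p ∧
        p.2 1 = r ∧ p.1 1 = (d' + 1) * a + f' + d' * r},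
        x ^ opParts (p : (ℕ →₀ ℕ) × (ℕ →₀ ℕ)) * q ^ opWt (p : (ℕ →₀ ℕ) × (ℕ →₀ ℕ))) =
      (x * q) ^ ((d' + 1) * a + f' + d' * r + r) *
        UbarGf (d' + 1) ((d' + 1) * (a + b) + (e' + 1)) ((d' + 1) * (b + 1 - r)) (x * q) q := by
  have hxq : ‖x * q‖ ≤ 1 := by
    rw [norm_mul]
    calc ‖x‖ * ‖q‖ ≤ 1 * 1 :=
      mul_le_mul hx hq.le (norm_nonneg q) zero_le_one
    _ = 1 := one_mul 1
  let e := caseEquiv d' e' f' a b r hfe hed hr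
  have ht := e.tsum_eq (fun p : ↥{p : (ℕ →₀ ℕ) × (ℕ →₀ ℕ) | IsOverPtn p ∧
      uCond (d' + 1) ((d' + 1) * (a + b) + (e' + 1)) ((d' + 1) * a + (f' + 1)) p ∧
      p.2 1 = r ∧ p.1 1 = (d' + 1) * a + f' + d' * r} =>
    x ^ opParts (p : (ℕ →₀ ℕ) × (ℕ →₀ ℕ)) * q ^ opWt (p : (ℕ →₀ ℕ) × (ℕ →₀ ℕ)))
  rw [← ht]
  have hpt : ∀ p' : ↥{p' : (ℕ →₀ ℕ) × (ℕ →₀ ℕ) | IsOverPtn p' ∧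
      ubarCond (d' + 1) ((d' + 1) * (a + b) + (e' + 1)) ((d' + 1) * (b + 1 - r)) p'},
      x ^ opParts ((lift ((d' + 1) * a + f' + d' * r) r (p' : (ℕ →₀ ℕ) × (ℕ →₀ ℕ)))) *
        q ^ opWt ((lift ((d' + 1) * a + f' + d' * r) r (p' : (ℕ →₀ ℕ) × (ℕ →₀ ℕ)))) =
      (x * q) ^ ((d' + 1) * a + f' + d' * r + r) *
        ((x * q) ^ opParts (p' : (ℕ →₀ ℕ) × (ℕ →₀ ℕ)) *
          q ^ opWt (p' : (ℕ →₀ ℕ) × (ℕ →₀ ℕ))) := by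
    intro p'
    rw [opParts_lift, opWt_lift]
    generalize opParts (p' : (ℕ →₀ ℕ) × (ℕ →₀ ℕ)) = m
    generalize opWt (p' : (ℕ →₀ ℕ) × (ℕ →₀ ℕ)) = n
    simp only [pow_add, mul_pow]
    ring
  calc ∑' (p' : ↥{p' : (ℕ →₀ ℕ) × (ℕ →₀ ℕ) | IsOverPtn p' ∧
        ubarCond (d' + 1) ((d' + 1) * (a + b) + (e' + 1)) ((d' + 1) * (b + 1 - r)) p'}),
        x ^ opParts ((e p' : (ℕ →₀ ℕ) × (ℕ →₀ ℕ))) * q ^ opWt ((e p' : (ℕ →₀ ℕ) × (ℕ →₀ ℕ)))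
      = ∑' (p' : ↥{p' : (ℕ →₀ ℕ) × (ℕ →₀ ℕ) | IsOverPtn p' ∧
          ubarCond (d' + 1) ((d' + 1) * (a + b) + (e' + 1)) ((d' + 1) * (b + 1 - r)) p'}),
          x ^ opParts ((lift ((d' + 1) * a + f' + d' * r) r (p' : (ℕ →₀ ℕ) × (ℕ →₀ ℕ)))) *
            q ^ opWt ((lift ((d' + 1) * a + f' + d' * r) r (p' : (ℕ →₀ ℕ) × (ℕ →₀ ℕ)))) :=
        tsum_congr (fun p' => rfl)
    _ = ∑' (p' : ↥{p' : (ℕ →₀ ℕ) × (ℕ →₀ ℕ) | IsOverPtn p' ∧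
          ubarCond (d' + 1) ((d' + 1) * (a + b) + (e' + 1)) ((d' + 1) * (b + 1 - r)) p'}),
          (x * q) ^ ((d' + 1) * a + f' + d' * r + r) *
            ((x * q) ^ opParts (p' : (ℕ →₀ ℕ) × (ℕ →₀ ℕ)) *
              q ^ opWt (p' : (ℕ →₀ ℕ) × (ℕ →₀ ℕ))) := tsum_congr hpt
    _ = (x * q) ^ ((d' + 1) * a + f' + d' * r + r) *
          ∑' (p' : ↥{p' : (ℕ →₀ ℕ) × (ℕ →₀ ℕ) | IsOverPtn p' ∧
            ubarCond (d' + 1) ((d' + 1) * (a + b) + (e' + 1)) ((d' + 1) * (b + 1 - r)) p'}),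
            (x * q) ^ opParts (p' : (ℕ →₀ ℕ) × (ℕ →₀ ℕ)) *
              q ^ opWt (p' : (ℕ →₀ ℕ) × (ℕ →₀ ℕ)) := tsum_mul_left
    _ = _ := by
        congr 1
        rw [← gf_eq (ubarCond (d' + 1) ((d' + 1) * (a + b) + (e' + 1))
          ((d' + 1) * (b + 1 - r))) hxq hq]
        simp only [UbarGf, ubarCount]


end KZ

/-- Lemma 2.2, first functional equation (case `f ≤ e`):
`U_{dk+e, da+f}(x) − U_{dk+e, da+f-1}(x)
  = (xq)^{da+f-1} Ū_{dk+e, d(k-a)+d}(xq) + (xq)^{da+d+f-1} Ū_{dk+e, d(k-a-1)+d}(xq)`.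
(Note `d(k-a-1) + d = d(k-a)`.) -/
theorem U_functional_equation (d k e a f : ℕ) (hd : 1 ≤ d) (hk : 1 ≤ k) (hak : a ≤ k)
    (he1 : 1 ≤ e) (hed : e ≤ d) (hf1 : 1 ≤ f) (hfe : f ≤ e)
    (x q : ℂ) (hx : ‖x‖ ≤ 1) (hq : ‖q‖ < 1) :
    Ugf d (d * k + e) (d * a + f) x q - Ugf d (d * k + e) (d * a + f - 1) x q
      = (x * q) ^ (d * a + f - 1) * UbarGf d (d * k + e) (d * (k - a) + d) (x * q) q
        + (x * q) ^ (d * a + d + f - 1) * UbarGf d (d * k + e) (d * (k - a)) (x * q) q := by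
  obtain ⟨d', rfl⟩ : ∃ d', d = d' + 1 := ⟨d - 1, by omega⟩
  obtain ⟨e', rfl⟩ : ∃ e', e = e' + 1 := ⟨e - 1, by omega⟩
  obtain ⟨f', rfl⟩ : ∃ f', f = f' + 1 := ⟨f - 1, by omega⟩
  obtain ⟨b, rfl⟩ : ∃ b, k = a + b := ⟨k - a, by omega⟩
  have hfe' : f' ≤ e' := by omega
  have hed' : e' ≤ d' := by omega
  have hU1 : Ugf (d' + 1) ((d' + 1) * (a + b) + (e' + 1)) ((d' + 1) * a + (f' + 1)) x q =
      ∑' p : ↥{p : (ℕ →₀ ℕ) × (ℕ →₀ ℕ) | IsOverPtn p ∧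
          uCond (d' + 1) ((d' + 1) * (a + b) + (e' + 1)) ((d' + 1) * a + f' + 1) p},
        x ^ opParts (p : (ℕ →₀ ℕ) × (ℕ →₀ ℕ)) * q ^ opWt (p : (ℕ →₀ ℕ) × (ℕ →₀ ℕ)) := by
    rw [Ugf]
    simp only [uCount]
    exact KZ.gf_eq (uCond (d' + 1) ((d' + 1) * (a + b) + (e' + 1)) ((d' + 1) * a + f' + 1)) hx hq
  have hU0 : Ugf (d' + 1) ((d' + 1) * (a + b) + (e' + 1)) ((d' + 1) * a + (f' + 1) - 1) x q =
      ∑' p : ↥{p : (ℕ →₀ ℕ) × (ℕ →₀ ℕ) | IsOverPtn p ∧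
          uCond (d' + 1) ((d' + 1) * (a + b) + (e' + 1)) ((d' + 1) * a + f') p},
        x ^ opParts (p : (ℕ →₀ ℕ) × (ℕ →₀ ℕ)) * q ^ opWt (p : (ℕ →₀ ℕ) × (ℕ →₀ ℕ)) := by
    rw [Ugf]
    simp only [uCount]
    exact KZ.gf_eq (uCond (d' + 1) ((d' + 1) * (a + b) + (e' + 1)) ((d' + 1) * a + f')) hx hq
  -- summability
  have smS0 := KZ.master_summable
    {p : (ℕ →₀ ℕ) × (ℕ →₀ ℕ) | IsOverPtn p ∧
      uCond (d' + 1) ((d' + 1) * (a + b) + (e' + 1)) ((d' + 1) * a + f') p}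
    (fun p hp => hp.1) hx hq
  have smD0 := KZ.master_summable
    {p : (ℕ →₀ ℕ) × (ℕ →₀ ℕ) | IsOverPtn p ∧
      uCond (d' + 1) ((d' + 1) * (a + b) + (e' + 1)) ((d' + 1) * a + f' + 1) p ∧
      p.2 1 = 0 ∧ p.1 1 = (d' + 1) * a + f' + d' * 0}
    (fun p hp => hp.1) hx hq
  have smD1 := KZ.master_summable
    {p : (ℕ →₀ ℕ) × (ℕ →₀ ℕ) | IsOverPtn p ∧
      uCond (d' + 1) ((d' + 1) * (a + b) + (e' + 1)) ((d' + 1) * a + f' + 1) p ∧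
      p.2 1 = 1 ∧ p.1 1 = (d' + 1) * a + f' + d' * 1}
    (fun p hp => hp.1) hx hq
  have smDD := KZ.master_summable
    ({p : (ℕ →₀ ℕ) × (ℕ →₀ ℕ) | IsOverPtn p ∧
      uCond (d' + 1) ((d' + 1) * (a + b) + (e' + 1)) ((d' + 1) * a + f' + 1) p ∧
      p.2 1 = 0 ∧ p.1 1 = (d' + 1) * a + f' + d' * 0} ∪
     {p : (ℕ →₀ ℕ) × (ℕ →₀ ℕ) | IsOverPtn p ∧
      uCond (d' + 1) ((d' + 1) * (a + b) + (e' + 1)) ((d' + 1) * a + f' + 1) p ∧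
      p.2 1 = 1 ∧ p.1 1 = (d' + 1) * a + f' + d' * 1})
    (fun p hp => by rcases hp with h | h; exacts [h.1, h.1]) hx hq
  have h23 : (∑' p : ↥({p : (ℕ →₀ ℕ) × (ℕ →₀ ℕ) | IsOverPtn p ∧
        uCond (d' + 1) ((d' + 1) * (a + b) + (e' + 1)) ((d' + 1) * a + f' + 1) p ∧
        p.2 1 = 0 ∧ p.1 1 = (d' + 1) * a + f' + d' * 0} ∪
      {p : (ℕ →₀ ℕ) × (ℕ →₀ ℕ) | IsOverPtn p ∧
        uCond (d' + 1) ((d' + 1) * (a + b) + (e' + 1)) ((d' + 1) * a + f' + 1) p ∧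
        p.2 1 = 1 ∧ p.1 1 = (d' + 1) * a + f' + d' * 1}),
        x ^ opParts (p : (ℕ →₀ ℕ) × (ℕ →₀ ℕ)) * q ^ opWt (p : (ℕ →₀ ℕ) × (ℕ →₀ ℕ))) =
      (∑' p : ↥{p : (ℕ →₀ ℕ) × (ℕ →₀ ℕ) | IsOverPtn p ∧
        uCond (d' + 1) ((d' + 1) * (a + b) + (e' + 1)) ((d' + 1) * a + f' + 1) p ∧
        p.2 1 = 0 ∧ p.1 1 = (d' + 1) * a + f' + d' * 0},
        x ^ opParts (p : (ℕ →₀ ℕ) × (ℕ →₀ ℕ)) * q ^ opWt (p : (ℕ →₀ ℕ) × (ℕ →₀ ℕ))) +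
      (∑' p : ↥{p : (ℕ →₀ ℕ) × (ℕ →₀ ℕ) | IsOverPtn p ∧
        uCond (d' + 1) ((d' + 1) * (a + b) + (e' + 1)) ((d' + 1) * a + f' + 1) p ∧
        p.2 1 = 1 ∧ p.1 1 = (d' + 1) * a + f' + d' * 1},
        x ^ opParts (p : (ℕ →₀ ℕ) × (ℕ →₀ ℕ)) * q ^ opWt (p : (ℕ →₀ ℕ) × (ℕ →₀ ℕ))) :=
    smD0.tsum_union_disjoint (f := fun p : (ℕ →₀ ℕ) × (ℕ →₀ ℕ) => x ^ opParts p * q ^ opWt p)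
      (KZ.disj2 d' ((d' + 1) * (a + b) + (e' + 1)) ((d' + 1) * a + f')) smD1
  have h123 := smS0.tsum_union_disjoint
    (f := fun p : (ℕ →₀ ℕ) × (ℕ →₀ ℕ) => x ^ opParts p * q ^ opWt p)
    (KZ.disj1 d' ((d' + 1) * (a + b) + (e' + 1)) ((d' + 1) * a + f')) smDD
  have hc0 : (∑' p : ↥{p : (ℕ →₀ ℕ) × (ℕ →₀ ℕ) | IsOverPtn p ∧
        uCond (d' + 1) ((d' + 1) * (a + b) + (e' + 1)) ((d' + 1) * a + f' + 1) p ∧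
        p.2 1 = 0 ∧ p.1 1 = (d' + 1) * a + f' + d' * 0},
        x ^ opParts (p : (ℕ →₀ ℕ) × (ℕ →₀ ℕ)) * q ^ opWt (p : (ℕ →₀ ℕ) × (ℕ →₀ ℕ))) =
      (x * q) ^ ((d' + 1) * a + (f' + 1) - 1) *
        UbarGf (d' + 1) ((d' + 1) * (a + b) + (e' + 1))
          ((d' + 1) * ((a + b) - a) + (d' + 1)) (x * q) q := by
    have hz : ∀ z : ℕ, z + (f' + 1) - 1 = z + f' + d' * 0 + 0 := fun z => by omega
    rw [Nat.add_sub_cancel_left, hz ((d' + 1) * a),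
      show (d' + 1) * b + (d' + 1) = (d' + 1) * (b + 1) from by ring]
    exact KZ.case_sum d' e' f' a b 0 hfe' hed' (by omega) hx hq
  have hc1 : (∑' p : ↥{p : (ℕ →₀ ℕ) × (ℕ →₀ ℕ) | IsOverPtn p ∧
        uCond (d' + 1) ((d' + 1) * (a + b) + (e' + 1)) ((d' + 1) * a + f' + 1) p ∧
        p.2 1 = 1 ∧ p.1 1 = (d' + 1) * a + f' + d' * 1},
        x ^ opParts (p : (ℕ →₀ ℕ) × (ℕ →₀ ℕ)) * q ^ opWt (p : (ℕ →₀ ℕ) × (ℕ →₀ ℕ))) =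
      (x * q) ^ ((d' + 1) * a + (d' + 1) + (f' + 1) - 1) *
        UbarGf (d' + 1) ((d' + 1) * (a + b) + (e' + 1))
          ((d' + 1) * ((a + b) - a)) (x * q) q := by
    have hz : ∀ z : ℕ, z + (d' + 1) + (f' + 1) - 1 = z + f' + d' * 1 + 1 := fun z => by omega
    rw [Nat.add_sub_cancel_left, hz ((d' + 1) * a)]
    exact KZ.case_sum d' e' f' a b 1 hfe' hed' (by omega) hx hq
  rw [hU1, hU0]
  rw [KZ.decomp d' ((d' + 1) * (a + b) + (e' + 1)) ((d' + 1) * a + f')]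
  rw [h123, h23, hc0, hc1]
  exact add_sub_cancel_left _ _
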